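/- Let Γ = R_n(a,r) with n even, a odd, and 4a ≢ 0 (mod n). Then the only automorphism of CDC(Γ) fixing the first rim cycle S_1 = {u_{i,j} : i ≡ j (mod 2)} pointwise and second rim cycle S_2 setwise is the identity. -/

import Mathlib

open SimpleGraph

/-- The Rose Window graph `R_n(a,r)`. Vertices `Sum.inl i = uᵢ`, `Sum.inr i = vᵢ`. -/
def roseWindow (n : ℕ) (a r : ZMod n) : SimpleGraph (ZMod n ⊕ ZMod n) :=
  SimpleGraph.fromRel (fun x y =>
    match x, y with
    | Sum.inl i, Sum.inl i' => i' = i + 1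
    | Sum.inr i, Sum.inr i' => i' = i + r
    | Sum.inl i', Sum.inr i => i' = i ∨ i' = i + a
    | _, _ => False)

/-- The canonical double cover of a graph. -/
def cdc {V : Type*} (G : SimpleGraph V) : SimpleGraph (V × ZMod 2) where
  Adj x y := G.Adj x.1 y.1 ∧ x.2 ≠ y.2
  symm := ⟨fun x y h => ⟨h.1.symm, h.2.symm⟩⟩
  loopless := ⟨fun x h => h.2 rfl⟩

/-- The automorphism group of a graph, as a subgroup of the permutations of vertices. -/
def autSubgroup {V : Type*} (G : SimpleGraph V) : Subgroup (Equiv.Perm V) where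
  carrier := {σ | ∀ x y, G.Adj (σ x) (σ y) ↔ G.Adj x y}
  one_mem' := by intro x y; rfl
  mul_mem' := by
    intro σ τ hσ hτ x y
    simpa [Equiv.Perm.mul_apply] using (hσ (τ x) (τ y)).trans (hτ x y)
  inv_mem' := by
    intro σ hσ x y
    conv_rhs => rw [← (show σ (σ⁻¹ x) = x from σ.apply_symm_apply x), ← (show σ (σ⁻¹ y) = y from σ.apply_symm_apply y)]
    exact (hσ (σ⁻¹ x) (σ⁻¹ y)).symm

lemma cdc_adj' {V : Type*} (G : SimpleGraph V) (x y : V × ZMod 2) :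
    (cdc G).Adj x y ↔ G.Adj x.1 y.1 ∧ x.2 ≠ y.2 := Iff.rfl

lemma rw_adj_uv' {n : ℕ} (a r : ZMod n) (k m : ZMod n) :
    (roseWindow n a r).Adj (Sum.inl k) (Sum.inr m) ↔ (k = m ∨ k = m + a) := by
  simp [roseWindow, SimpleGraph.fromRel_adj]

lemma rw_adj_vu' {n : ℕ} (a r : ZMod n) (k m : ZMod n) :
    (roseWindow n a r).Adj (Sum.inr m) (Sum.inl k) ↔ (k = m ∨ k = m + a) := by
  rw [SimpleGraph.adj_comm]; exact rw_adj_uv' a r k m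

lemma zmod2_ne_add_one : ∀ j : ZMod 2, j ≠ j + 1 := by decide
lemma zmod2_eq_of_ne_add_one : ∀ j' j : ZMod 2, j' ≠ j + 1 → j' = j := by decide
lemma zmod2_eq_add_one_of_ne : ∀ j' j : ZMod 2, j' ≠ j → j' = j + 1 := by decide
lemma zmod2_sub_one : ∀ x : ZMod 2, x - 1 = x + 1 := by decide
lemma zmod2_add_one_add_one : ∀ j : ZMod 2, j + 1 + 1 = j := by decide

/-- under the stated arithmetic conditions, the only automorphism of
`CDC(R_n(a,r))` fixing the rim cycle `S₁` pointwise and `S₂` setwise is the identity. -/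
theorem fix_rim_identity_12 (n a r : ℕ) (hn : 3 ≤ n) (hne : Even n) (hao : Odd a) (h4a : ¬ n ∣ 4 * a)
    (ha : (a : ZMod n) ≠ 0) (hr : (r : ZMod n) ≠ 0) :
    let S1 : Set ((ZMod n ⊕ ZMod n) × ZMod 2) :=
      {p | ∃ (i : ZMod n) (j : ZMod 2), p = (Sum.inl i, j) ∧ ((ZMod.val i : ZMod 2) = j)}
    let S2 : Set ((ZMod n ⊕ ZMod n) × ZMod 2) :=
      {p | ∃ (i : ZMod n) (j : ZMod 2), p = (Sum.inl i, j) ∧ ((ZMod.val i : ZMod 2) ≠ j)}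
    ∀ σ ∈ autSubgroup (cdc (roseWindow n a r)),
      (∀ x ∈ S1, σ x = x) → (σ : _ → _) '' S2 = S2 → ∀ x, σ x = x := by
  intro S1 S2 σ hσ h1 h2
  haveI : NeZero n := ⟨by omega⟩
  set A : ZMod n := (a : ZMod n) with hAdef
  set G := cdc (roseWindow n (a : ZMod n) (r : ZMod n)) with hGdef
  have hadj : ∀ x y, G.Adj (σ x) (σ y) ↔ G.Adj x y := hσ
  -- arithmetic facts
  have h2n : (2 : ℕ) ∣ n := hne.two_dvd
  set π : ZMod n →+* ZMod 2 := ZMod.castHom h2n (ZMod 2) with hπdef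
  have hval : ∀ x : ZMod n, ((ZMod.val x : ZMod 2)) = π x := by
    intro x; rw [ZMod.natCast_val, ZMod.castHom_apply]
  have hπA : π A = 1 := by
    have : ((a : ℕ) : ZMod 2) = 1 := by
      obtain ⟨k, hk⟩ := hao; subst hk; push_cast; rw [show (2:ZMod 2)=0 by decide]; ring
    rw [hAdef, map_natCast, this]
  have hA4 : 4 * A ≠ 0 := by
    intro h
    apply h4a
    have : ((4 * a : ℕ) : ZMod n) = 0 := by push_cast; linear_combination h
    exact (ZMod.natCast_eq_zero_iff _ _).mp this
  have hA2 : 2 * A ≠ 0 := fun h => hA4 (by linear_combination 2 * h)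
  have hA3 : 3 * A ≠ 0 := by
    intro h
    have : ((3 * a : ℕ) : ZMod n) = 0 := by push_cast; linear_combination h
    have hdvd : n ∣ 3 * a := (ZMod.natCast_eq_zero_iff _ _).mp this
    have : Even (3 * a) := (even_iff_two_dvd).mpr (dvd_trans h2n hdvd)
    have hodd : Odd (3 * a) := (by decide : Odd 3).mul hao
    exact (Nat.not_odd_iff_even.mpr this) hodd
  have hA1 : A ≠ 0 := ha
  -- S1 fixed pointwise
  have L1 : ∀ (i : ZMod n) (j : ZMod 2), π i = j → σ (Sum.inl i, j) = (Sum.inl i, j) := by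
    intro i j hij
    exact h1 _ ⟨i, j, rfl, by rw [hval]; exact hij⟩
  -- v-vertices map to v-vertices
  have VV : ∀ (m : ZMod n) (j : ZMod 2), ∃ m' j', σ (Sum.inr m, j) = (Sum.inr m', j') := by
    intro m j
    rcases hq : σ (Sum.inr m, j) with ⟨i | m', j'⟩
    · exfalso
      by_cases hp : ((ZMod.val i : ZMod 2)) = j'
      · have hfix : σ (Sum.inl i, j') = (Sum.inl i, j') := h1 _ ⟨i, j', rfl, hp⟩
        have := σ.injective (hfix.trans hq.symm)
        simp at this
      · have hmem : ((Sum.inl i, j') : (ZMod n ⊕ ZMod n) × ZMod 2) ∈ S2 := ⟨i, j', rfl, hp⟩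
        rw [← h2] at hmem
        obtain ⟨p, hp2, hpe⟩ := hmem
        have hpeq : p = (Sum.inr m, j) := σ.injective (hpe.trans hq.symm)
        rw [hpeq] at hp2
        obtain ⟨i₀, j₀, habs, _⟩ := hp2
        simp at habs
    · exact ⟨m', j', rfl⟩
  -- the two options for images of v-vertices
  have LV : ∀ (m : ZMod n) (j : ZMod 2) (k : ZMod n), (k = m ∨ k = m + A) → π k = j + 1 →
      σ (Sum.inr m, j) = (Sum.inr k, j) ∨ σ (Sum.inr m, j) = (Sum.inr (k - A), j) := by
    intro m j k hk hkp
    have hfix : σ (Sum.inl k, j + 1) = (Sum.inl k, j + 1) := L1 k (j + 1) hkp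
    obtain ⟨m', j', hm'⟩ := VV m j
    have hadj1 : G.Adj (Sum.inr m, j) (Sum.inl k, j + 1) := by
      rw [hGdef, cdc_adj']
      exact ⟨(rw_adj_vu' _ _ _ _).mpr hk, zmod2_ne_add_one j⟩
    have h3 := (hadj _ _).mpr hadj1
    rw [hm', hfix, hGdef, cdc_adj'] at h3
    obtain ⟨hrw, hj⟩ := h3
    have hj' : j' = j := zmod2_eq_of_ne_add_one j' j hj
    subst hj'
    rcases (rw_adj_vu' _ _ _ _).mp hrw with h | h
    · left; rw [hm', h]
    · right; rw [hm', eq_sub_of_add_eq h.symm]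
  -- main local rigidity
  have Main : ∀ (i : ZMod n) (j : ZMod 2), π i = j + 1 →
      σ (Sum.inl i, j) = (Sum.inl i, j) ∧
      σ (Sum.inr i, j + 1) = (Sum.inr i, j + 1) ∧
      σ (Sum.inr (i - A), j + 1) = (Sum.inr (i - A), j + 1) := by
    intro i j hij
    have hx := LV i (j + 1) (i + A) (Or.inr rfl)
      (by rw [map_add, hij, hπA])
    have hy := LV (i - A) (j + 1) (i - A) (Or.inl rfl)
      (by rw [map_sub, hij, hπA, zmod2_sub_one])
    rw [add_sub_cancel_right] at hx
    -- σ (inl i, j) is in S2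
    have hmemS2 : ((Sum.inl i, j) : (ZMod n ⊕ ZMod n) × ZMod 2) ∈ S2 := by
      refine ⟨i, j, rfl, ?_⟩
      rw [hval, hij]; exact fun h => zmod2_ne_add_one j h.symm
    have himg : σ (Sum.inl i, j) ∈ S2 := by rw [← h2]; exact ⟨_, hmemS2, rfl⟩
    obtain ⟨g, l, hg, hgl⟩ := himg
    -- adjacency to the two v-neighbours
    have had1 : G.Adj (Sum.inl i, j) (Sum.inr i, j + 1) := by
      rw [hGdef, cdc_adj']
      exact ⟨(rw_adj_uv' _ _ _ _).mpr (Or.inl rfl), zmod2_ne_add_one j⟩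
    have had2 : G.Adj (Sum.inl i, j) (Sum.inr (i - A), j + 1) := by
      rw [hGdef, cdc_adj']
      exact ⟨(rw_adj_uv' _ _ _ _).mpr (Or.inr (by ring)), zmod2_ne_add_one j⟩
    have hc1 := (hadj _ _).mpr had1
    have hc2 := (hadj _ _).mpr had2
    rw [hg] at hc1 hc2
    rcases hx with hx | hx <;> rcases hy with hy | hy <;>
      rw [hx] at hc1 <;> rw [hy] at hc2 <;>
      rw [hGdef, cdc_adj'] at hc1 hc2 <;>
      obtain ⟨hc1', -⟩ := hc1 <;> obtain ⟨hc2', -⟩ := hc2 <;>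
      rw [rw_adj_uv'] at hc1' hc2'
    -- case x = i + A, y = i - A : impossible
    · exfalso
      rcases hc1' with h1' | h1' <;> rcases hc2' with h2' | h2'
      · exact hA2 (by linear_combination h2' - h1')
      · exact hA1 (by linear_combination h2' - h1')
      · exact hA3 (by linear_combination h2' - h1')
      · exact hA2 (by linear_combination h2' - h1')
    -- case x = i + A, y = i - 2A : impossible
    · exfalso
      rcases hc1' with h1' | h1' <;> rcases hc2' with h2' | h2'
      · exact hA3 (by linear_combination h2' - h1')
      · exact hA2 (by linear_combination h2' - h1')
      · exact hA4 (by linear_combination h2' - h1')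
      · exact hA3 (by linear_combination h2' - h1')
    -- case x = i, y = i - A : the identity case
    · have hgi : g = i := by
        rcases hc1' with h1' | h1' <;> rcases hc2' with h2' | h2'
        · exact h1'
        · exact h1'
        · exact absurd (by linear_combination h2' - h1') hA2
        · exact absurd (by linear_combination h2' - h1') hA1
      -- second coordinate
      have hlj : l = j := by
        have hvg : (ZMod.val g : ZMod 2) ≠ l := hgl
        rw [hval, hgi, hij] at hvg
        exact zmod2_eq_of_ne_add_one l j (fun hh => hvg hh.symm)
      refine ⟨?_, hx, hy⟩
      rw [hg, hgi, hlj]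
    -- case x = i, y = i - 2A : impossible
    · exfalso
      rcases hc1' with h1' | h1' <;> rcases hc2' with h2' | h2'
      · exact hA2 (by linear_combination h2' - h1')
      · exact hA1 (by linear_combination h2' - h1')
      · exact hA3 (by linear_combination h2' - h1')
      · exact hA2 (by linear_combination h2' - h1')
  -- final assembly
  intro x
  rcases x with ⟨i | m, j⟩
  · by_cases hp : π i = j
    · exact L1 i j hp
    · have hij : π i = j + 1 := by
        rw [← hval] at hp ⊢
        exact zmod2_eq_add_one_of_ne _ _ hp
      exact (Main i j hij).1
  · by_cases hp : π m = j
    · have hmain := (Main m (j + 1) (by rw [zmod2_add_one_add_one j]; exact hp)).2.1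
      rwa [zmod2_add_one_add_one j] at hmain
    · have hpm : π m = j + 1 := by
        rw [← hval] at hp ⊢
        exact zmod2_eq_add_one_of_ne _ _ hp
      have hmain := (Main (m + A) (j + 1)
        (by rw [map_add, hπA, hpm, zmod2_add_one_add_one j, ← zmod2_add_one_add_one j])).2.2
      rwa [add_sub_cancel_right, zmod2_add_one_add_one j] at hmain
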